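/- Let 0 < θ̄ ≤ π. For all θ with |θ| ≤ θ̄, sin(θ) ≤ cos(θ̄/2)(θ − θ̄/2) + sin(θ̄/2) and sin(θ) ≥ cos(θ̄/2)(θ + θ̄/2) − sin(θ̄/2). -/

import Mathlib

open Real Set

/-- If `g` has derivative `g'` everywhere and `g' ≥ 0` on `[lo, hi]`, then
`g lo ≤ g x` for `x ∈ [lo, hi]`. -/
lemma aux_mono_ge {g g' : ℝ → ℝ} {lo hi : ℝ}
    (hg : ∀ x, HasDerivAt g (g' x) x)
    (h : ∀ x ∈ Set.Icc lo hi, 0 ≤ g' x) :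
    ∀ x ∈ Set.Icc lo hi, g lo ≤ g x := by
  intro x hx
  have hmono : MonotoneOn g (Set.Icc lo hi) := by
    apply monotoneOn_of_deriv_nonneg (convex_Icc lo hi)
    · exact fun y _ => (hg y).continuousAt.continuousWithinAt
    · exact fun y hy => ((hg y).differentiableAt).differentiableWithinAt
    · intro y hy
      rw [(hg y).deriv]
      exact h y (interior_subset hy)
  have hlo : lo ∈ Set.Icc lo hi := ⟨le_refl _, hx.1.trans hx.2⟩
  exact hmono hlo hx hx.1

/-- Antitone version: if `g' ≤ 0` on `[lo, hi]`, then `g hi ≤ g x` on `[lo, hi]`. -/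
lemma aux_anti_ge {g g' : ℝ → ℝ} {lo hi : ℝ}
    (hg : ∀ x, HasDerivAt g (g' x) x)
    (h : ∀ x ∈ Set.Icc lo hi, g' x ≤ 0) :
    ∀ x ∈ Set.Icc lo hi, g hi ≤ g x := by
  intro x hx
  have := aux_mono_ge (g := fun t => g (-t)) (g' := fun t => -g' (-t)) (lo := -hi) (hi := -lo)
    (fun t => ((hg (-t)).comp t (hasDerivAt_neg t)).congr_deriv (by ring))
    (fun t ht => by
      have : -t ∈ Set.Icc lo hi := ⟨by linarith [ht.2], by linarith [ht.1]⟩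
      simpa using h (-t) this)
    (-x) ⟨by linarith [hx.2], by linarith [hx.1]⟩
  simpa using this

lemma aux_p_nonneg {a : ℝ} (ha0 : 0 ≤ a) (ha : a ≤ Real.pi / 2) :
    0 ≤ Real.sin a + Real.sin (2 * a) - 3 * a * Real.cos a := by
  -- p(a) = sin a + sin 2a - 3a cos a, p' = -2cos a + 2cos 2a + 3a sin a =: q
  -- q' = 2 sin a - 4 sin 2a + 3 sin a + 3a cos a = 5 sin a - 4 sin 2a + 3a cos a ≥ 0
  set q : ℝ → ℝ := fun x => -2 * Real.cos x + 2 * Real.cos (2 * x) + 3 * x * Real.sin x with hq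
  have hqderiv : ∀ x : ℝ, HasDerivAt q
      (5 * Real.sin x - 4 * Real.sin (2 * x) + 3 * x * Real.cos x) x := by
    intro x
    have hi : HasDerivAt (fun y : ℝ => 2 * y) 2 x := by
      simpa using (hasDerivAt_id x).const_mul 2
    have h1 : HasDerivAt (fun y => Real.cos (2 * y)) (-Real.sin (2 * x) * 2) x :=
      (Real.hasDerivAt_cos (2 * x)).comp x hi
    have h2 : HasDerivAt (fun y : ℝ => 3 * y * Real.sin y)
        (3 * Real.sin x + 3 * x * Real.cos x) x := by
      have := (((hasDerivAt_id x).const_mul 3).mul (Real.hasDerivAt_sin x))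
      refine this.congr_deriv ?_; simp only [id_eq]; ring
    have := (((Real.hasDerivAt_cos x).const_mul (-2 : ℝ)).add (h1.const_mul 2)).add h2
    refine this.congr_deriv ?_; ring
  have hq_nonneg : ∀ x ∈ Set.Icc (0:ℝ) (Real.pi / 2), 0 ≤ q x := by
    have hstep : ∀ x ∈ Set.Icc (0:ℝ) (Real.pi / 2),
        0 ≤ 5 * Real.sin x - 4 * Real.sin (2 * x) + 3 * x * Real.cos x := by
      intro x hx
      have hs : 0 ≤ Real.sin x := Real.sin_nonneg_of_nonneg_of_le_pi hx.1
        (hx.2.trans (by linarith [Real.pi_pos]))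
      have hc : 0 ≤ Real.cos x := Real.cos_nonneg_of_mem_Icc
        ⟨by linarith [hx.1, Real.pi_pos], hx.2⟩
      have hc1 : Real.cos x ≤ 1 := Real.cos_le_one x
      have hxs : Real.sin x ≤ x := Real.sin_le hx.1
      rw [Real.sin_two_mul]
      nlinarith
    intro x hx
    have := aux_mono_ge hqderiv hstep x hx
    simpa [hq] using this
  have hpderiv : ∀ x : ℝ, HasDerivAt
      (fun y => Real.sin y + Real.sin (2 * y) - 3 * y * Real.cos y) (q x) x := by
    intro x
    have hi : HasDerivAt (fun y : ℝ => 2 * y) 2 x := by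
      simpa using (hasDerivAt_id x).const_mul 2
    have h1 : HasDerivAt (fun y => Real.sin (2 * y)) (Real.cos (2 * x) * 2) x :=
      (Real.hasDerivAt_sin (2 * x)).comp x hi
    have h2 : HasDerivAt (fun y : ℝ => 3 * y * Real.cos y)
        (3 * Real.cos x + 3 * x * -Real.sin x) x := by
      have := (((hasDerivAt_id x).const_mul 3).mul (Real.hasDerivAt_cos x))
      refine this.congr_deriv ?_; simp only [id_eq]; ring
    have := ((Real.hasDerivAt_sin x).add h1).sub h2
    refine this.congr_deriv ?_
    simp [hq]; ring
  have := aux_mono_ge hpderiv hq_nonneg a ⟨ha0, ha⟩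
  simpa using this

/-- Tangent line at `a` bounds `sin` above on `[-2a, 2a]` for `0 < a ≤ π/2`. -/
lemma aux_upper {a θ : ℝ} (ha0 : 0 < a) (ha : a ≤ Real.pi / 2)
    (h1 : -(2 * a) ≤ θ) (h2 : θ ≤ 2 * a) :
    Real.sin θ ≤ Real.cos a * (θ - a) + Real.sin a := by
  set f : ℝ → ℝ := fun x => Real.cos a * (x - a) + Real.sin a - Real.sin x with hf
  have hfd : ∀ x : ℝ, HasDerivAt f (Real.cos a - Real.cos x) x := by
    intro x
    have := ((((hasDerivAt_id x).sub_const a).const_mul (Real.cos a)).add_const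
      (Real.sin a)).sub (Real.hasDerivAt_sin x)
    refine this.congr_deriv ?_; ring
  have hpi := Real.pi_pos
  have key : 0 ≤ f θ := by
    rcases le_total θ (-a) with hcase | hcase
    · -- f monotone on [-2a, -a], f(-2a) = p(a) ≥ 0
      have hmon := aux_mono_ge hfd (g' := fun x => Real.cos a - Real.cos x)
        (lo := -(2*a)) (hi := -a)
        (fun x hx => by
          have hxa : a ≤ -x := by linarith [hx.2]
          have : Real.cos (-x) ≤ Real.cos a :=
            Real.cos_le_cos_of_nonneg_of_le_pi ha0.le (by linarith [hx.1]) hxa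
          rw [Real.cos_neg] at this
          show (0:ℝ) ≤ Real.cos a - Real.cos x
          linarith)
        θ ⟨h1, hcase⟩
      have hp := aux_p_nonneg ha0.le ha
      have hflo : f (-(2*a)) = Real.sin a + Real.sin (2*a) - 3 * a * Real.cos a := by
        simp [hf, Real.sin_neg]; ring
      linarith [hmon]
    · rcases le_total θ a with hcase2 | hcase2
      · -- f antitone on [-a, a], f(a) = 0
        have hanti := aux_anti_ge hfd (g' := fun x => Real.cos a - Real.cos x)
          (lo := -a) (hi := a)
          (fun x hx => by
            have : Real.cos a ≤ Real.cos x := by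
              rcases le_total 0 x with hx0 | hx0
              · exact Real.cos_le_cos_of_nonneg_of_le_pi hx0 (by linarith) hx.2
              · have := Real.cos_le_cos_of_nonneg_of_le_pi (by linarith [hx.1] : (0:ℝ) ≤ -x)
                  (by linarith) (by linarith [hx.1] : -x ≤ a)
                rwa [Real.cos_neg] at this
            show Real.cos a - Real.cos x ≤ 0
            linarith)
          θ ⟨hcase, hcase2⟩
        have hfa : f a = 0 := by simp [hf]
        linarith [hanti]
      · -- f monotone on [a, 2a], f(a) = 0
        have hmon := aux_mono_ge hfd (g' := fun x => Real.cos a - Real.cos x)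
          (lo := a) (hi := 2*a)
          (fun x hx => by
            have : Real.cos x ≤ Real.cos a :=
              Real.cos_le_cos_of_nonneg_of_le_pi ha0.le (by linarith [hx.2]) hx.1
            show (0:ℝ) ≤ Real.cos a - Real.cos x
            linarith)
          θ ⟨hcase2, h2⟩
        have hfa : f a = 0 := by simp [hf]
        linarith [hmon]
  simp only [hf] at key
  linarith

/-- Linear envelopes for the sine function over a symmetric interval:
the tangent lines at `θ̄/2` and `-θ̄/2` bound `sin` from above and below. -/
theorem sin_linear_envelopes (θb θ : ℝ) (hθb0 : 0 < θb) (hθbπ : θb ≤ Real.pi)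
    (hθ : |θ| ≤ θb) :
    Real.sin θ ≤ Real.cos (θb / 2) * (θ - θb / 2) + Real.sin (θb / 2) ∧
    Real.sin θ ≥ Real.cos (θb / 2) * (θ + θb / 2) - Real.sin (θb / 2) := by
  rw [abs_le] at hθ
  have ha0 : 0 < θb / 2 := by linarith
  have ha : θb / 2 ≤ Real.pi / 2 := by linarith
  constructor
  · exact aux_upper (a := θb / 2) (θ := θ) ha0 ha (by linarith [hθ.1]) (by linarith [hθ.2])
  · have := aux_upper (a := θb / 2) (θ := -θ) ha0 ha (by linarith [hθ.2]) (by linarith [hθ.1])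
    rw [Real.sin_neg] at this
    have : -(Real.cos (θb/2) * (-θ - θb/2) + Real.sin (θb/2)) ≤ Real.sin θ := by linarith
    calc Real.cos (θb/2) * (θ + θb/2) - Real.sin (θb/2)
        = -(Real.cos (θb/2) * (-θ - θb/2) + Real.sin (θb/2)) := by ring
      _ ≤ Real.sin θ := this
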